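/- Let k ≥ 1 and let n be an integer with 2^{2k-1} - 1 ≤ n ≤ 2^{2k} - 1. Then S(n) ≤ 2^k, and S(n) = 2^k if and only if n = 2^{2k} - 1 - ∑_{r=0}^{k-2} ε_r·(3·2^{2r+1}) - β for some choice of ε_r ∈ {0,1} (for 0 ≤ r ≤ k-2) and β ∈ {0,2}. -/

import Mathlib

/-- `inv2 n` is the number of inversions in the binary representation of `n`,
i.e. the number of pairs of bit positions `a > b` such that bit `a` of `n` is `1`
and bit `b` of `n` is `0`. -/
def inv2 (n : ℕ) : ℕ :=
  ((Finset.range (n + 1) ×ˢ Finset.range (n + 1)).filter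
    (fun p => p.2 < p.1 ∧ n.testBit p.1 = true ∧ n.testBit p.2 = false)).card

/-- `iSeq n = (-1)^(inv2 n)`. -/
def iSeq (n : ℕ) : ℤ := (-1) ^ inv2 n


/-- The summatory function `S N = ∑_{0 ≤ n ≤ N} iSeq n`. -/
def S (N : ℕ) : ℤ := ∑ n ∈ Finset.range (N + 1), iSeq n


/-- An integer `n` is of the special form for `k ≥ 1` if
`n = 2^(2k) - 1 - ∑_{r=0}^{k-2} ε_r (3 ⬝ 2^(2r+1)) - β` for some choice of
`ε_r ∈ {0,1}` and `β ∈ {0,2}`. -/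
def IsSpecialForm (k : ℕ) (n : ℤ) : Prop :=
  ∃ ε : ℕ → ℤ, (∀ r, ε r = 0 ∨ ε r = 1) ∧
    ∃ β : ℤ, (β = 0 ∨ β = 2) ∧
      n = 2 ^ (2 * k) - 1 - (∑ r ∈ Finset.range (k - 1), ε r * (3 * 2 ^ (2 * r + 1))) - β


open Finset

/-- number of 1 bits of `n` -/
def onesB (n : ℕ) : ℕ := ((Finset.range (n+1)).filter (fun j => n.testBit j = true)).card

def tm (n : ℕ) : ℤ := (-1) ^ onesB n

def Tsum (N : ℕ) : ℤ := ∑ n ∈ Finset.range (N + 1), iSeq n * tm n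

lemma testBit_lt {n j : ℕ} (h : n.testBit j = true) : j < n + 1 := by
  have h2 : 2^j ≤ n := Nat.ge_two_pow_of_testBit h
  have h3 := Nat.lt_two_pow_self (n := j)
  omega

/-- stability of the one-dimensional count -/
lemma onesB_eq (n M : ℕ) (h : n + 1 ≤ M) :
    ((Finset.range M).filter (fun j => n.testBit j = true)).card = onesB n := by
  unfold onesB
  congr 1
  apply Finset.ext
  intro j
  simp only [Finset.mem_filter, Finset.mem_range]
  constructor
  · rintro ⟨hj, hb⟩; exact ⟨testBit_lt hb, hb⟩
  · rintro ⟨hj, hb⟩; exact ⟨by omega, hb⟩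

lemma testBit_two_mul_add_one_succ (n j : ℕ) : (2*n+1).testBit (j+1) = n.testBit j := by
  rw [Nat.testBit_succ]
  congr 1
  omega

lemma testBit_two_mul_succ (n j : ℕ) : (2*n).testBit (j+1) = n.testBit j := by
  rw [Nat.testBit_succ]
  congr 1
  omega

lemma testBit_two_mul_add_one_zero (n : ℕ) : (2*n+1).testBit 0 = true := by
  simp [Nat.testBit_zero]

lemma testBit_two_mul_zero (n : ℕ) : (2*n).testBit 0 = false := by
  simp [Nat.testBit_zero]

lemma onesB_two_mul_add_one (n : ℕ) : onesB (2*n+1) = onesB n + 1 := by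
  have h1 : onesB (2*n+1) = ((Finset.range (2*n+2)).filter (fun j => (2*n+1).testBit j = true)).card := by
    rfl
  rw [h1]
  -- split off j = 0
  have h2 : (Finset.range (2*n+2)).filter (fun j => (2*n+1).testBit j = true)
      = insert 0 (((Finset.range (n+1)).filter (fun j => n.testBit j = true)).image (· + 1)) := by
    apply Finset.ext
    intro j
    simp only [Finset.mem_filter, Finset.mem_range, Finset.mem_insert, Finset.mem_image]
    constructor
    · rintro ⟨hj, hb⟩
      rcases j with _ | j
      · exact Or.inl rfl
      · right
        rw [testBit_two_mul_add_one_succ] at hb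
        exact ⟨j, ⟨testBit_lt hb, hb⟩, rfl⟩
    · rintro (rfl | ⟨j', ⟨hj', hb'⟩, rfl⟩)
      · exact ⟨by omega, testBit_two_mul_add_one_zero n⟩
      · refine ⟨by omega, ?_⟩
        rw [testBit_two_mul_add_one_succ]; exact hb'
  rw [h2, Finset.card_insert_of_notMem, Finset.card_image_of_injective _ (add_left_injective 1)]
  · rfl
  · simp
lemma onesB_two_mul (n : ℕ) : onesB (2*n) = onesB n := by
  have h1 : onesB (2*n) = ((Finset.range (2*n+2)).filter (fun j => (2*n).testBit j = true)).card :=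
    (onesB_eq (2*n) (2*n+2) (by omega)).symm
  rw [h1]
  have h2 : (Finset.range (2*n+2)).filter (fun j => (2*n).testBit j = true)
      = ((Finset.range (n+1)).filter (fun j => n.testBit j = true)).image (· + 1) := by
    apply Finset.ext
    intro j
    simp only [Finset.mem_filter, Finset.mem_range, Finset.mem_image]
    constructor
    · rintro ⟨hj, hb⟩
      rcases j with _ | j
      · rw [testBit_two_mul_zero] at hb; exact absurd hb (by simp)
      · rw [testBit_two_mul_succ] at hb
        exact ⟨j, ⟨testBit_lt hb, hb⟩, rfl⟩
    · rintro ⟨j', ⟨hj', hb'⟩, rfl⟩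
      refine ⟨by omega, ?_⟩
      rw [testBit_two_mul_succ]; exact hb'
  rw [h2, Finset.card_image_of_injective _ (add_left_injective 1)]
  rfl

lemma tm_zero : tm 0 = 1 := by decide
lemma tm_two_mul (n : ℕ) : tm (2*n) = tm n := by unfold tm; rw [onesB_two_mul]
lemma tm_two_mul_add_one (n : ℕ) : tm (2*n+1) = -tm n := by
  unfold tm; rw [onesB_two_mul_add_one, pow_succ]; ring
lemma tm_pm (n : ℕ) : tm n = 1 ∨ tm n = -1 := by
  unfold tm
  rcases Nat.even_or_odd (onesB n) with h | h
  · left; exact Even.neg_one_pow h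
  · right; exact Odd.neg_one_pow h

lemma iSeq_pm (n : ℕ) : iSeq n = 1 ∨ iSeq n = -1 := by
  unfold iSeq
  rcases Nat.even_or_odd (inv2 n) with h | h
  · left; exact Even.neg_one_pow h
  · right; exact Odd.neg_one_pow h


lemma inv2_eq (n M : ℕ) (h : n + 1 ≤ M) :
    ((Finset.range M ×ˢ Finset.range M).filter
      (fun p => p.2 < p.1 ∧ n.testBit p.1 = true ∧ n.testBit p.2 = false)).card = inv2 n := by
  unfold inv2
  congr 1
  apply Finset.ext
  rintro ⟨a, b⟩
  simp only [Finset.mem_filter, Finset.mem_product, Finset.mem_range]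
  constructor
  · rintro ⟨⟨ha, hb⟩, hlt, h1, h0⟩
    have := testBit_lt h1
    exact ⟨⟨by omega, by omega⟩, hlt, h1, h0⟩
  · rintro ⟨⟨ha, hb⟩, hlt, h1, h0⟩
    exact ⟨⟨by omega, by omega⟩, hlt, h1, h0⟩

lemma inv2_two_mul_add_one (n : ℕ) : inv2 (2*n+1) = inv2 n := by
  have h1 : inv2 (2*n+1) = ((Finset.range (2*n+2) ×ˢ Finset.range (2*n+2)).filter
      (fun p => p.2 < p.1 ∧ (2*n+1).testBit p.1 = true ∧ (2*n+1).testBit p.2 = false)).card := rfl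
  rw [h1, ← inv2_eq n (2*n+2) (by omega)]
  symm
  refine Finset.card_bij' (fun p _ => (p.1 + 1, p.2 + 1)) (fun p _ => (p.1 - 1, p.2 - 1)) ?_ ?_ ?_ ?_
  · rintro ⟨a, b⟩ hab
    simp only [Finset.mem_filter, Finset.mem_product, Finset.mem_range] at hab ⊢
    obtain ⟨⟨ha, hb⟩, hlt, h1', h0⟩ := hab
    have hlt2 := testBit_lt h1'
    refine ⟨⟨by omega, by omega⟩, by omega, ?_, ?_⟩
    · rw [testBit_two_mul_add_one_succ]; exact h1'
    · rw [testBit_two_mul_add_one_succ]; exact h0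
  · rintro ⟨a, b⟩ hab
    simp only [Finset.mem_filter, Finset.mem_product, Finset.mem_range] at hab ⊢
    obtain ⟨⟨ha, hb⟩, hlt, h1', h0⟩ := hab
    have hb0 : b ≠ 0 := by
      intro h; rw [h, testBit_two_mul_add_one_zero] at h0; exact absurd h0 (by simp)
    have ha0 : a ≠ 0 := by omega
    obtain ⟨a', rfl⟩ : ∃ a', a = a' + 1 := ⟨a - 1, by omega⟩
    obtain ⟨b', rfl⟩ : ∃ b', b = b' + 1 := ⟨b - 1, by omega⟩
    rw [testBit_two_mul_add_one_succ] at h1' h0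
    simp only [Nat.add_sub_cancel]
    have := testBit_lt h1'
    exact ⟨⟨by omega, by omega⟩, by omega, h1', h0⟩
  · rintro ⟨a, b⟩ _; simp
  · rintro ⟨a, b⟩ hab
    simp only [Finset.mem_filter, Finset.mem_product, Finset.mem_range] at hab
    obtain ⟨⟨ha, hb⟩, hlt, h1', h0⟩ := hab
    have hb0 : b ≠ 0 := by
      intro h; rw [h, testBit_two_mul_add_one_zero] at h0; exact absurd h0 (by simp)
    have : a ≠ 0 := by omega
    simp only [Prod.mk.injEq]
    omega

lemma inv2_two_mul (n : ℕ) : inv2 (2*n) = inv2 n + onesB n := by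
  have h1 : inv2 (2*n) = ((Finset.range (2*n+2) ×ˢ Finset.range (2*n+2)).filter
      (fun p => p.2 < p.1 ∧ (2*n).testBit p.1 = true ∧ (2*n).testBit p.2 = false)).card :=
    (inv2_eq (2*n) (2*n+2) (by omega)).symm
  rw [h1]
  have hsplit := Finset.card_filter_add_card_filter_not
    (s := (Finset.range (2*n+2) ×ˢ Finset.range (2*n+2)).filter
      (fun p => p.2 < p.1 ∧ (2*n).testBit p.1 = true ∧ (2*n).testBit p.2 = false))
    (p := fun p => p.2 = 0)
  rw [Finset.filter_filter, Finset.filter_filter] at hsplit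
  -- the b ≠ 0 part is inv2 n
  have hB : ((Finset.range (2*n+2) ×ˢ Finset.range (2*n+2)).filter
      (fun p => (p.2 < p.1 ∧ (2*n).testBit p.1 = true ∧ (2*n).testBit p.2 = false) ∧ ¬ p.2 = 0)).card
      = inv2 n := by
    rw [← inv2_eq n (2*n+2) (by omega)]
    symm
    refine Finset.card_bij' (fun p _ => (p.1 + 1, p.2 + 1)) (fun p _ => (p.1 - 1, p.2 - 1)) ?_ ?_ ?_ ?_
    · rintro ⟨a, b⟩ hab
      simp only [Finset.mem_filter, Finset.mem_product, Finset.mem_range] at hab ⊢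
      obtain ⟨⟨ha, hb⟩, hlt, h1', h0⟩ := hab
      have hlt2 := testBit_lt h1'
      refine ⟨⟨by omega, by omega⟩, ⟨by omega, ?_, ?_⟩, by omega⟩
      · rw [testBit_two_mul_succ]; exact h1'
      · rw [testBit_two_mul_succ]; exact h0
    · rintro ⟨a, b⟩ hab
      simp only [Finset.mem_filter, Finset.mem_product, Finset.mem_range] at hab ⊢
      obtain ⟨⟨ha, hb⟩, ⟨hlt, h1', h0⟩, hb0⟩ := hab
      obtain ⟨a', rfl⟩ : ∃ a', a = a' + 1 := ⟨a - 1, by omega⟩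
      obtain ⟨b', rfl⟩ : ∃ b', b = b' + 1 := ⟨b - 1, by omega⟩
      rw [testBit_two_mul_succ] at h1' h0
      simp only [Nat.add_sub_cancel]
      have := testBit_lt h1'
      exact ⟨⟨by omega, by omega⟩, by omega, h1', h0⟩
    · rintro ⟨a, b⟩ _; simp
    · rintro ⟨a, b⟩ hab
      simp only [Finset.mem_filter, Finset.mem_product, Finset.mem_range] at hab
      obtain ⟨⟨ha, hb⟩, ⟨hlt, h1', h0⟩, hb0⟩ := hab
      simp only [Prod.mk.injEq]
      omega
  -- the b = 0 part is onesB n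
  have hA : ((Finset.range (2*n+2) ×ˢ Finset.range (2*n+2)).filter
      (fun p => (p.2 < p.1 ∧ (2*n).testBit p.1 = true ∧ (2*n).testBit p.2 = false) ∧ p.2 = 0)).card
      = onesB n := by
    unfold onesB
    symm
    refine Finset.card_bij' (fun j _ => (j + 1, 0)) (fun p _ => p.1 - 1) ?_ ?_ ?_ ?_
    · intro j hj
      simp only [Finset.mem_filter, Finset.mem_product, Finset.mem_range] at hj ⊢
      obtain ⟨hj1, hb⟩ := hj
      refine ⟨⟨by omega, by omega⟩, ⟨by omega, ?_, ?_⟩, trivial⟩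
      · rw [testBit_two_mul_succ]; exact hb
      · exact testBit_two_mul_zero n
    · rintro ⟨a, b⟩ hab
      simp only [Finset.mem_filter, Finset.mem_product, Finset.mem_range] at hab ⊢
      obtain ⟨⟨ha, hb⟩, ⟨hlt, h1', h0⟩, hb0⟩ := hab
      subst hb0
      obtain ⟨a', rfl⟩ : ∃ a', a = a' + 1 := ⟨a - 1, by omega⟩
      rw [testBit_two_mul_succ] at h1'
      simp only [Nat.add_sub_cancel]
      have := testBit_lt h1'
      exact ⟨by omega, h1'⟩
    · intro j _; simp
    · rintro ⟨a, b⟩ hab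
      simp only [Finset.mem_filter, Finset.mem_product, Finset.mem_range] at hab
      obtain ⟨⟨ha, hb⟩, ⟨hlt, h1', h0⟩, hb0⟩ := hab
      subst hb0
      simp only [Prod.mk.injEq]
      exact ⟨by omega, by trivial⟩
  omega

lemma iSeq_two_mul_add_one (n : ℕ) : iSeq (2*n+1) = iSeq n := by
  unfold iSeq; rw [inv2_two_mul_add_one]

lemma iSeq_two_mul (n : ℕ) : iSeq (2*n) = tm n * iSeq n := by
  unfold iSeq tm; rw [inv2_two_mul, pow_add, mul_comm]

lemma S_succ (N : ℕ) : S (N+1) = S N + iSeq (N+1) := Finset.sum_range_succ _ _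
lemma Tsum_succ (N : ℕ) : Tsum (N+1) = Tsum N + iSeq (N+1) * tm (N+1) := Finset.sum_range_succ _ _

lemma inv2_zero : inv2 0 = 0 := by decide
lemma inv2_one : inv2 1 = 0 := by decide
lemma iSeq_zero : iSeq 0 = 1 := by unfold iSeq; rw [inv2_zero]; rfl
lemma iSeq_one : iSeq 1 = 1 := by unfold iSeq; rw [inv2_one]; rfl
lemma onesB_one : onesB 1 = 1 := by decide
lemma tm_one : tm 1 = -1 := by unfold tm; rw [onesB_one]; rfl
lemma S_zero : S 0 = 1 := by unfold S; simp [iSeq_zero]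
lemma S_one : S 1 = 2 := by
  have := S_succ 0
  rw [S_zero, iSeq_one] at this; rw [this]; norm_num
lemma Tsum_zero : Tsum 0 = 1 := by unfold Tsum; simp [iSeq_zero, tm_zero]
lemma Tsum_one : Tsum 1 = 0 := by
  have := Tsum_succ 0
  rw [Tsum_zero, iSeq_one, tm_one] at this; rw [this]; norm_num

lemma tm_sq (n : ℕ) : tm n * tm n = 1 := by rcases tm_pm n with h | h <;> rw [h] <;> norm_num

lemma ST_odd (N : ℕ) : S (2*N+1) = S N + Tsum N ∧ Tsum (2*N+1) = S N - Tsum N := by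
  induction N with
  | zero => constructor
            · rw [S_one, S_zero, Tsum_zero]; norm_num
            · rw [Tsum_one, S_zero, Tsum_zero]; norm_num
  | succ N ih =>
    obtain ⟨ih1, ih2⟩ := ih
    have e1 : 2*(N+1)+1 = (2*N+1) + 1 + 1 := by ring
    have e2 : 2*N+1+1 = 2*(N+1) := by ring
    constructor
    · rw [e1, S_succ, S_succ, e2, iSeq_two_mul, ← e2, ← e1]
      have e3 : 2*(N+1)+1 = 2*(N+1)+1 := rfl
      rw [show (2*(N+1)+1) = 2*(N+1)+1 from rfl]
      rw [show iSeq (2*(N+1)+1) = iSeq (N+1) from iSeq_two_mul_add_one (N+1)]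
      rw [ih1, S_succ, Tsum_succ]
      ring
    · rw [e1, Tsum_succ, Tsum_succ, e2, iSeq_two_mul, tm_two_mul, ← e2, ← e1]
      rw [show iSeq (2*(N+1)+1) = iSeq (N+1) from iSeq_two_mul_add_one (N+1)]
      rw [show tm (2*(N+1)+1) = -tm (N+1) from tm_two_mul_add_one (N+1)]
      rw [ih2, S_succ, Tsum_succ]
      have h2 : iSeq (N+1) * tm (N+1) * tm (N+1) = iSeq (N+1) := by
        rw [mul_assoc, tm_sq, mul_one]
      linear_combination h2 + (tm (N+1) * iSeq (N+1)) * (1 - 1)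
  
lemma S_two_mul_add_one (N : ℕ) : S (2*N+1) = S N + Tsum N := (ST_odd N).1
lemma Tsum_two_mul_add_one (N : ℕ) : Tsum (2*N+1) = S N - Tsum N := (ST_odd N).2

lemma S_two_mul (N : ℕ) : S (2*N) = S N + Tsum N - iSeq N := by
  have h := S_succ (2*N)
  rw [show 2*N+1 = 2*N+1 from rfl] at h
  have h2 := S_two_mul_add_one N
  rw [h2] at h
  rw [iSeq_two_mul_add_one] at h
  linarith

lemma Tsum_two_mul (N : ℕ) : Tsum (2*N) = S N - Tsum N + iSeq N * tm N := by
  have h := Tsum_succ (2*N)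
  have h2 := Tsum_two_mul_add_one N
  rw [h2, iSeq_two_mul_add_one, tm_two_mul_add_one] at h
  linarith

lemma ST_two_mul_add_one (N : ℕ) : S (2*N+1) + Tsum (2*N+1) = 2 * S N := by
  rw [S_two_mul_add_one, Tsum_two_mul_add_one]; ring

lemma ST_two_mul (N : ℕ) : S (2*N) + Tsum (2*N) = 2 * S N + iSeq N * (tm N - 1) := by
  rw [S_two_mul, Tsum_two_mul]; ring

lemma ST_even_dvd (N : ℕ) : 2 ∣ S N + Tsum N := by
  induction N with
  | zero => rw [S_zero, Tsum_zero]; norm_num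
  | succ N ih =>
    rw [S_succ, Tsum_succ]
    have : S N + iSeq (N+1) + (Tsum N + iSeq (N+1) * tm (N+1))
        = (S N + Tsum N) + iSeq (N+1) * (1 + tm (N+1)) := by ring
    rw [this]
    rcases tm_pm (N+1) with h | h
    · rw [h]
      exact dvd_add ih ⟨iSeq (N+1), by ring⟩
    · rw [h]
      simpa using ih

/-- the set of "pair starts": maximizers of `S + Tsum` on even intervals come in
pairs `{a, a+1}` with `a ∈ P_k`. -/
def IsP : ℕ → ℕ → Prop
  | 0, m => m = 0
  | (k+1), m => ∃ a, IsP k a ∧ (m = 4*a+3 ∨ m = 4*a+6)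

lemma isP_facts {k a : ℕ} (h : IsP k a) :
    iSeq a = 1 ∧ tm a = 1 ∧ iSeq (a+1) = 1 ∧ tm (a+1) = -1 ∧
    S a + Tsum a = 2^(k+1) ∧ S (a+1) + Tsum (a+1) = 2^(k+1) := by
  induction k generalizing a with
  | zero =>
    have ha : a = 0 := h
    subst ha
    refine ⟨iSeq_zero, tm_zero, iSeq_one, tm_one, ?_, ?_⟩
    · rw [S_zero, Tsum_zero]; norm_num
    · rw [S_one, Tsum_one]; norm_num
  | succ k ih =>
    obtain ⟨a', ha', hcase⟩ := h
    obtain ⟨i1, t1, i2, t2, st1, st2⟩ := ih ha'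
    -- values at p₁ = 2a'+1
    have hi_p1 : iSeq (2*a'+1) = 1 := by rw [iSeq_two_mul_add_one]; exact i1
    have ht_p1 : tm (2*a'+1) = -1 := by rw [tm_two_mul_add_one, t1]
    have hS_p1 : S (2*a'+1) = 2^(k+1) := by rw [S_two_mul_add_one]; exact st1
    -- values at p₂ = 2*(a'+1) = 2a'+2
    have hi_p2 : iSeq (2*(a'+1)) = -1 := by rw [iSeq_two_mul, t2, i2]; norm_num
    have ht_p2 : tm (2*(a'+1)) = -1 := by rw [tm_two_mul]; exact t2
    have hS_p2 : S (2*(a'+1)) = 2^(k+1) - 1 := by rw [S_two_mul, i2]; linarith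
    -- values at p₃ = 2*(a'+1)+1 = 2a'+3
    have hi_p3 : iSeq (2*(a'+1)+1) = 1 := by rw [iSeq_two_mul_add_one]; exact i2
    have ht_p3 : tm (2*(a'+1)+1) = 1 := by rw [tm_two_mul_add_one, t2]; norm_num
    have hS_p3 : S (2*(a'+1)+1) = 2^(k+1) := by rw [S_two_mul_add_one]; exact st2
    rcases hcase with rfl | rfl
    · -- a = 4a'+3
      have e1 : 4*a'+3 = 2*(2*a'+1)+1 := by ring
      have e2 : 4*a'+3+1 = 2*(2*(a'+1)) := by ring
      refine ⟨?_, ?_, ?_, ?_, ?_, ?_⟩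
      · rw [e1, iSeq_two_mul_add_one]; exact hi_p1
      · rw [e1, tm_two_mul_add_one, ht_p1]; norm_num
      · rw [e2, iSeq_two_mul, ht_p2, hi_p2]; norm_num
      · rw [e2, tm_two_mul]; exact ht_p2
      · rw [e1, ST_two_mul_add_one, hS_p1]; ring
      · rw [e2, ST_two_mul, hS_p2, hi_p2, ht_p2]; ring
    · -- a = 4a'+6
      have e1 : 4*a'+6 = 2*(2*(a'+1)+1) := by ring
      have e2 : 4*a'+6+1 = 2*(2*(a'+1)+1)+1 := by ring
      refine ⟨?_, ?_, ?_, ?_, ?_, ?_⟩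
      · rw [e1, iSeq_two_mul, ht_p3, hi_p3]; norm_num
      · rw [e1, tm_two_mul]; exact ht_p3
      · rw [e2, iSeq_two_mul_add_one]; exact hi_p3
      · rw [e2, tm_two_mul_add_one, ht_p3]
      · rw [e1, ST_two_mul, hS_p3, hi_p3, ht_p3]; ring
      · rw [e2, ST_two_mul_add_one, hS_p3]; ring

lemma isP_succ_iff {k m : ℕ} : IsP (k+1) m ↔ ∃ a, IsP k a ∧ (m = 4*a+3 ∨ m = 4*a+6) := Iff.rfl

def EvenFwd (k : ℕ) : Prop := ∀ m : ℕ, 2^(2*k) ≤ m + 1 → m < 2^(2*k+1) →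
  S m + Tsum m ≤ 2^(k+1) ∧
  (S m + Tsum m = 2^(k+1) → IsP k m ∨ ∃ a, IsP k a ∧ m = a + 1)

def OddFwd (k : ℕ) : Prop := ∀ p : ℕ, 2^(2*k+1) ≤ p + 1 → p < 2^(2*k+2) →
  S p ≤ 2^(k+1) ∧
  (S p = 2^(k+1) → ∃ a, IsP k a ∧ (p = 2*a+1 ∨ p = 2*a+3)) ∧
  (S p = 2^(k+1) - 1 → iSeq p = -1 → tm p = -1 → ∃ a, IsP k a ∧ p = 2*a+2)

lemma evenFwd_zero : EvenFwd 0 := by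
  intro m h1 h2
  norm_num at h2
  interval_cases m
  · rw [S_zero, Tsum_zero]
    exact ⟨by norm_num, fun _ => Or.inl rfl⟩
  · rw [S_one, Tsum_one]
    exact ⟨by norm_num, fun _ => Or.inr ⟨0, rfl, rfl⟩⟩

lemma oddFwd_of_evenFwd (k : ℕ) (he : EvenFwd k) : OddFwd k := by
  intro p hp1 hp2
  have hq1 : (2:ℕ)^(2*k+1) = 2 * 2^(2*k) := by ring
  have hq2 : (2:ℕ)^(2*k+2) = 4 * 2^(2*k) := by ring
  have hQd : (2:ℤ) ∣ 2^(k+1) := dvd_pow_self 2 (Nat.succ_ne_zero k)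
  rcases Nat.even_or_odd p with ⟨m, hm⟩ | ⟨m, hm⟩
  · -- p = 2m
    obtain rfl : p = 2*m := by omega
    obtain ⟨hEle, hEchar⟩ := he m (by omega) (by omega)
    have hdvd := ST_even_dvd m
    have hSm := S_two_mul m
    have htmm := tm_two_mul m
    have himm := iSeq_two_mul m
    have key : S (2*m) ≤ 2^(k+1) - 1 := by
      rcases iSeq_pm m with i1 | i1
      · rw [i1] at hSm; linarith
      · rw [i1] at hSm
        have hne : S m + Tsum m ≠ 2^(k+1) := by
          intro heq
          rcases hEchar heq with hP | ⟨a, ha, rfl⟩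
          · have := (isP_facts hP).1; rw [this] at i1; norm_num at i1
          · have := (isP_facts ha).2.2.1; rw [this] at i1; norm_num at i1
        omega
    refine ⟨by linarith, fun hS => absurd hS (by omega), ?_⟩
    intro hS hi ht
    rcases iSeq_pm m with i1 | i1
    · rw [i1] at hSm
      have heq : S m + Tsum m = 2^(k+1) := by linarith
      rcases hEchar heq with hP | ⟨a, ha, rfl⟩
      · have htm1 := (isP_facts hP).2.1
        rw [htmm, htm1] at ht; norm_num at ht
      · exact ⟨a, ha, by ring⟩
    · rw [i1] at himm
      rw [himm] at hi
      have : tm m = 1 := by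
        rcases tm_pm m with h | h
        · exact h
        · rw [h] at hi; norm_num at hi
      rw [htmm, this] at ht; norm_num at ht
  · -- p = 2m+1
    obtain rfl : p = 2*m+1 := hm
    obtain ⟨hEle, hEchar⟩ := he m (by omega) (by omega)
    have hdvd := ST_even_dvd m
    have hSm := S_two_mul_add_one m
    refine ⟨by linarith, ?_, ?_⟩
    · intro hS
      rw [hSm] at hS
      rcases hEchar hS with hP | ⟨a, ha, rfl⟩
      · exact ⟨m, hP, Or.inl rfl⟩
      · exact ⟨a, ha, Or.inr (by ring)⟩
    · intro hS _ _
      rw [hSm] at hS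
      exfalso; omega

lemma evenFwd_of_oddFwd (k : ℕ) (ho : OddFwd k) : EvenFwd (k+1) := by
  intro m hm1 hm2
  have hq1 : (2:ℕ)^(2*(k+1)) = 4 * 2^(2*k) := by ring
  have hq2 : (2:ℕ)^(2*(k+1)+1) = 8 * 2^(2*k) := by ring
  have hq3 : (2:ℕ)^(2*k+1) = 2 * 2^(2*k) := by ring
  have hq4 : (2:ℕ)^(2*k+2) = 4 * 2^(2*k) := by ring
  have hQ : (2:ℤ)^(k+1+1) = 2 * 2^(k+1) := by ring
  rcases Nat.even_or_odd m with ⟨p, hp⟩ | ⟨p, hp⟩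
  · -- m = 2p
    obtain rfl : m = 2*p := by omega
    obtain ⟨h1, h2, h3⟩ := ho p (by omega) (by omega)
    have hST := ST_two_mul p
    rcases tm_pm p with t1 | t1
    · rw [t1] at hST
      have hST' : S (2*p) + Tsum (2*p) = 2 * S p := by rw [hST]; ring
      constructor
      · rw [hST', hQ]; linarith
      · intro heq
        rw [hST', hQ] at heq
        have hSp : S p = 2^(k+1) := by linarith
        obtain ⟨a, ha, hc⟩ := h2 hSp
        rcases hc with rfl | rfl
        · -- p = 2a+1 : tm p = -1, contradiction
          exfalso
          have := (isP_facts ha).2.1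
          have htp : tm (2*a+1) = -1 := by rw [tm_two_mul_add_one, this]
          rw [htp] at t1; norm_num at t1
        · left
          rw [isP_succ_iff]
          exact ⟨a, ha, Or.inr (by ring)⟩
    · rw [t1] at hST
      rcases iSeq_pm p with i1 | i1
      · rw [i1] at hST
        have hST' : S (2*p) + Tsum (2*p) = 2 * S p - 2 := by rw [hST]; ring
        constructor
        · rw [hST', hQ]; linarith
        · intro heq; rw [hST', hQ] at heq
          exfalso
          have : S p = 2^(k+1) + 1 := by linarith
          linarith
      · rw [i1] at hST
        have hST' : S (2*p) + Tsum (2*p) = 2 * S p + 2 := by rw [hST]; ring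
        have hlt : S p ≤ 2^(k+1) - 1 := by
          have hne : S p ≠ 2^(k+1) := by
            intro hSp
            obtain ⟨a, ha, hc⟩ := h2 hSp
            rcases hc with rfl | rfl
            · have := (isP_facts ha).1
              have : iSeq (2*a+1) = 1 := by rw [iSeq_two_mul_add_one]; exact this
              rw [this] at i1; norm_num at i1
            · have h4 := (isP_facts ha).2.2.1
              have e : 2*a+3 = 2*(a+1)+1 := by ring
              have : iSeq (2*a+3) = 1 := by rw [e, iSeq_two_mul_add_one]; exact h4
              rw [this] at i1; norm_num at i1
          omega
        constructor
        · rw [hST', hQ]; linarith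
        · intro heq; rw [hST', hQ] at heq
          have hSp : S p = 2^(k+1) - 1 := by linarith
          obtain ⟨a, ha, rfl⟩ := h3 hSp i1 t1
          right
          refine ⟨4*a+3, ?_, by ring⟩
          rw [isP_succ_iff]
          exact ⟨a, ha, Or.inl rfl⟩
  · -- m = 2p+1
    obtain rfl : m = 2*p+1 := hp
    obtain ⟨h1, h2, h3⟩ := ho p (by omega) (by omega)
    have hST := ST_two_mul_add_one p
    constructor
    · rw [hST, hQ]; linarith
    · intro heq
      rw [hST, hQ] at heq
      have hSp : S p = 2^(k+1) := by linarith
      obtain ⟨a, ha, hc⟩ := h2 hSp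
      rcases hc with rfl | rfl
      · left
        rw [isP_succ_iff]
        exact ⟨a, ha, Or.inl (by ring)⟩
      · right
        refine ⟨4*a+6, ?_, by ring⟩
        rw [isP_succ_iff]
        exact ⟨a, ha, Or.inr rfl⟩

lemma evenFwd_all (k : ℕ) : EvenFwd k := by
  induction k with
  | zero => exact evenFwd_zero
  | succ k ih => exact evenFwd_of_oddFwd k (oddFwd_of_evenFwd k ih)

lemma oddFwd_all (k : ℕ) : OddFwd k := oddFwd_of_evenFwd k (evenFwd_all k)


lemma sum_split (k : ℕ) (ε : ℕ → ℤ) :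
    ∑ r ∈ Finset.range (k+1), ε r * (3 * 4^r)
      = ε 0 * 3 + 4 * ∑ r ∈ Finset.range k, ε (r+1) * (3 * 4^r) := by
  rw [Finset.sum_range_succ']
  rw [Finset.sum_congr rfl (fun r (_ : r ∈ Finset.range k) =>
    (by ring : ε (r+1) * (3 * 4^(r+1)) = 4 * (ε (r+1) * (3 * 4^r)))), ← Finset.mul_sum]
  ring

lemma sum_eps_bound (k : ℕ) (ε : ℕ → ℤ) (hε : ∀ r, ε r = 0 ∨ ε r = 1) :
    0 ≤ ∑ r ∈ Finset.range k, ε r * (3 * 4^r) ∧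
      ∑ r ∈ Finset.range k, ε r * (3 * 4^r) ≤ 4^k - 1 := by
  induction k with
  | zero => simp
  | succ k ih =>
    obtain ⟨ih1, ih2⟩ := ih
    have h4 : (0:ℤ) < 4^k := by positivity
    have he : (4:ℤ)^(k+1) = 4 * 4^k := by ring
    rw [Finset.sum_range_succ]
    rcases hε k with h | h <;> rw [h] <;> constructor <;> linarith

lemma pow_two_mul_succ (K : ℕ) : (2:ℤ)^(2*K+1) = 2 * 4^K := by
  rw [pow_succ, pow_mul]
  norm_num
  ring

lemma isP_closed (k : ℕ) : ∀ a : ℕ, IsP k a ↔ ∃ ε : ℕ → ℤ, (∀ r, ε r = 0 ∨ ε r = 1) ∧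
    (a:ℤ) = 2^(2*k+1) - 2 - ∑ r ∈ Finset.range k, ε r * (3 * 4^r) := by
  induction k with
  | zero =>
    intro a
    constructor
    · intro h
      have ha : a = 0 := h
      subst ha
      exact ⟨fun _ => 0, fun _ => Or.inl rfl, by norm_num⟩
    · rintro ⟨ε, hε, heq⟩
      simp only [Finset.range_zero, Finset.sum_empty] at heq
      norm_num at heq
      exact_mod_cast heq
  | succ k ih =>
    intro a
    constructor
    · intro h
      obtain ⟨a', ha', hc⟩ := h
      obtain ⟨ε', hε', heq'⟩ := (ih a').mp ha'
      rcases hc with rfl | rfl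
      · have hgood : ∀ r : ℕ, (if r = 0 then (1:ℤ) else ε' (r-1)) = 0 ∨ (if r = 0 then (1:ℤ) else ε' (r-1)) = 1 := by
          intro r
          rcases Nat.eq_zero_or_pos r with rfl | hr
          · simp
          · have hr' : r ≠ 0 := by omega
            simpa [hr'] using hε' (r-1)
        refine ⟨fun r => if r = 0 then 1 else ε' (r-1), hgood, ?_⟩
        rw [sum_split]
        simp only [if_pos rfl]
        have hs : ∑ r ∈ Finset.range k, (if r+1 = 0 then (1:ℤ) else ε' (r+1-1)) * (3 * 4^r)
            = ∑ r ∈ Finset.range k, ε' r * (3 * 4^r) :=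
          Finset.sum_congr rfl (fun r _ => by simp)
        rw [hs]
        have hp : (2:ℤ)^(2*(k+1)+1) = 4 * 2^(2*k+1) := by
          rw [pow_two_mul_succ, pow_two_mul_succ]; ring
        push_cast
        rw [hp]
        linarith [heq']
      · have hgood : ∀ r : ℕ, (if r = 0 then (0:ℤ) else ε' (r-1)) = 0 ∨ (if r = 0 then (0:ℤ) else ε' (r-1)) = 1 := by
          intro r
          rcases Nat.eq_zero_or_pos r with rfl | hr
          · simp
          · have hr' : r ≠ 0 := by omega
            simpa [hr'] using hε' (r-1)
        refine ⟨fun r => if r = 0 then 0 else ε' (r-1), hgood, ?_⟩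
        rw [sum_split]
        simp only [if_pos rfl]
        have hs : ∑ r ∈ Finset.range k, (if r+1 = 0 then (0:ℤ) else ε' (r+1-1)) * (3 * 4^r)
            = ∑ r ∈ Finset.range k, ε' r * (3 * 4^r) :=
          Finset.sum_congr rfl (fun r _ => by simp)
        rw [hs]
        have hp : (2:ℤ)^(2*(k+1)+1) = 4 * 2^(2*k+1) := by
          rw [pow_two_mul_succ, pow_two_mul_succ]; ring
        push_cast
        rw [hp]
        linarith [heq']
    · rintro ⟨ε, hε, heq⟩
      rw [sum_split] at heq
      set Ssum := ∑ r ∈ Finset.range k, ε (r+1) * (3 * 4^r) with hSsum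
      obtain ⟨hb1, hb2⟩ := sum_eps_bound k (fun r => ε (r+1)) (fun r => hε (r+1))
      rw [← hSsum] at hb1 hb2
      have hX : (0:ℤ) ≤ 2^(2*k+1) - 2 - Ssum := by
        have := pow_two_mul_succ k
        have h4 : (0:ℤ) < 4^k := by positivity
        linarith
      set X : ℤ := 2^(2*k+1) - 2 - Ssum with hXdef
      have hA' : ((X.toNat : ℕ) : ℤ) = X := Int.toNat_of_nonneg hX
      have hP' : IsP k X.toNat := (ih X.toNat).mpr ⟨fun r => ε (r+1), fun r => hε (r+1), by rw [hA']⟩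
      have hp : (2:ℤ)^(2*(k+1)+1) = 4 * 2^(2*k+1) := by
        rw [pow_two_mul_succ, pow_two_mul_succ]; ring
      rcases hε 0 with h0 | h0
      · -- ε 0 = 0 : a = 4a'+6
        refine ⟨X.toNat, hP', Or.inr ?_⟩
        have : (a:ℤ) = 4 * X + 6 := by rw [hXdef]; rw [h0] at heq; rw [hp] at heq; linarith
        rw [← hA'] at this
        exact_mod_cast this
      · -- ε 0 = 1 : a = 4a'+3
        refine ⟨X.toNat, hP', Or.inl ?_⟩
        have : (a:ℤ) = 4 * X + 3 := by rw [hXdef]; rw [h0] at heq; rw [hp] at heq; linarith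
        rw [← hA'] at this
        exact_mod_cast this

lemma sum_double (K : ℕ) (ε : ℕ → ℤ) :
    ∑ r ∈ Finset.range K, ε r * (3 * 2^(2*r+1)) = 2 * ∑ r ∈ Finset.range K, ε r * (3 * 4^r) := by
  rw [Finset.mul_sum]
  refine Finset.sum_congr rfl (fun r _ => ?_)
  rw [pow_two_mul_succ]
  ring

lemma special_equiv (K : ℕ) (n : ℕ) :
    (∃ a, IsP K a ∧ (n = 2*a+1 ∨ n = 2*a+3)) ↔ IsSpecialForm (K+1) (n:ℤ) := by
  unfold IsSpecialForm
  have hrange : K + 1 - 1 = K := rfl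
  have hp : (2:ℤ)^(2*(K+1)) = 2 * 2^(2*K+1) := by
    rw [pow_two_mul_succ]
    have : 2*(K+1) = 2*K+2 := by ring
    rw [this, pow_succ, pow_succ, pow_mul]
    norm_num
    ring
  constructor
  · rintro ⟨a, ha, hc⟩
    obtain ⟨ε, hε, heq⟩ := (isP_closed K a).mp ha
    refine ⟨ε, hε, ?_⟩
    rcases hc with rfl | rfl
    · refine ⟨2, Or.inr rfl, ?_⟩
      rw [hrange, sum_double, hp]
      push_cast
      linarith [heq]
    · refine ⟨0, Or.inl rfl, ?_⟩
      rw [hrange, sum_double, hp]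
      push_cast
      linarith [heq]
  · rintro ⟨ε, hε, β, hβ, heq⟩
    rw [hrange, sum_double, hp] at heq
    obtain ⟨hb1, hb2⟩ := sum_eps_bound K ε hε
    have hX : (0:ℤ) ≤ 2^(2*K+1) - 2 - ∑ r ∈ Finset.range K, ε r * (3 * 4^r) := by
      have := pow_two_mul_succ K
      have h4 : (0:ℤ) < 4^K := by positivity
      linarith
    set X : ℤ := 2^(2*K+1) - 2 - ∑ r ∈ Finset.range K, ε r * (3 * 4^r) with hXdef
    have hA : ((X.toNat : ℕ) : ℤ) = X := Int.toNat_of_nonneg hX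
    have hP : IsP K X.toNat := (isP_closed K X.toNat).mpr ⟨ε, hε, by rw [hA]⟩
    refine ⟨X.toNat, hP, ?_⟩
    rcases hβ with rfl | rfl
    · right
      have : (n:ℤ) = 2 * X + 3 := by rw [hXdef]; linarith
      rw [← hA] at this
      exact_mod_cast this
    · left
      have : (n:ℤ) = 2 * X + 1 := by rw [hXdef]; linarith
      rw [← hA] at this
      exact_mod_cast this


theorem summatory_max_on_Jk (k : ℕ) (hk : 1 ≤ k) (n : ℕ)
    (h₁ : 2 ^ (2 * k - 1) - 1 ≤ n) (h₂ : n ≤ 2 ^ (2 * k) - 1) :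
    S n ≤ 2 ^ k ∧ (S n = 2 ^ k ↔ IsSpecialForm k (n : ℤ)) := by
  obtain ⟨K, rfl⟩ : ∃ K, k = K + 1 := ⟨k - 1, by omega⟩
  have he1 : 2 * (K+1) - 1 = 2*K+1 := by omega
  have he2 : 2 * (K+1) = 2*K+2 := by ring
  rw [he1] at h₁
  rw [he2] at h₂
  have hpos1 : (1:ℕ) ≤ 2^(2*K+1) := Nat.one_le_two_pow
  have hpos2 : (1:ℕ) ≤ 2^(2*K+2) := Nat.one_le_two_pow
  obtain ⟨hb, hc, _⟩ := oddFwd_all K n (by omega) (by omega)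
  refine ⟨hb, ?_⟩
  constructor
  · intro hS
    exact (special_equiv K n).mp ((hc hS).imp (fun a ⟨ha, hor⟩ => ⟨ha, hor⟩))
  · intro hsp
    obtain ⟨a, ha, hor⟩ := (special_equiv K n).mpr hsp
    obtain ⟨_, _, _, _, st1, st2⟩ := isP_facts ha
    rcases hor with rfl | rfl
    · rw [S_two_mul_add_one]
      exact st1
    · have e : 2*a+3 = 2*(a+1)+1 := by ring
      rw [e, S_two_mul_add_one]
      exact st2
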